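/- For every prebiworld w of depth μ and ordinals γ ≤ α ≤ μ, restricting w to α and then to γ equals restricting w directly to γ: (w|_α)|_γ = w|_γ. -/

import Mathlib

open Ordinal

/-- Three truth values: true, false, unknown. -/
inductive TV : Type
  | t | f | u
deriving DecidableEq

namespace TV

/-- Inverse of a truth value. -/
def inv : TV → TV
  | t => f
  | f => t
  | u => u

/-- Binary greatest lower bound in the truth order f ≤ₜ u ≤ₜ t. -/
def tmin : TV → TV → TV
  | f, _ => f
  | _, f => f
  | u, _ => u
  | _, u => u
  | t, t => t

/-- Truth value of a proposition. -/
noncomputable def ofProp (p : Prop) : TV := by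
  classical
  exact if p then t else f

/-- Greatest lower bound of a set of truth values in the truth order f ≤ₜ u ≤ₜ t. -/
noncomputable def tglbSet (s : Set TV) : TV := by
  classical
  exact if f ∈ s then f else if u ∈ s then u else t

/-- Least upper bound of a (chain) set of truth values in the precision order
u ≤ₚ t, u ≤ₚ f. -/
noncomputable def plubSet (s : Set TV) : TV := by
  classical
  exact if t ∈ s then t else if f ∈ s then f else u

/-- Precision order on truth values: u below everything. -/
def ple (a b : TV) : Prop := a = u ∨ a = b

end TV

/-- Formulas of the language COEL. -/
inductive Form (Agent Atom : Type) : Type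
  | atom : Atom → Form Agent Atom
  | neg : Form Agent Atom → Form Agent Atom
  | and : Form Agent Atom → Form Agent Atom → Form Agent Atom
  | K : Agent → Form Agent Atom → Form Agent Atom
  | M : Agent → Form Agent Atom → Form Agent Atom
  | E : Set Agent → Form Agent Atom → Form Agent Atom
  | C : Set Agent → Form Agent Atom → Form Agent Atom

/-- Iterated `E_G` operator: `Eiter G 0 φ = φ`, `Eiter G (k+1) φ = E_G (Eiter G k φ)`. -/
def Form.Eiter {Agent Atom : Type} (G : Set Agent) : ℕ → Form Agent Atom → Form Agent Atom
  | 0, φ => φ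
  | k + 1, φ => .E G (Form.Eiter G k φ)

/-- Modal depth of a COEL formula. -/
noncomputable def Form.MD {Agent Atom : Type} : Form Agent Atom → Ordinal.{0}
  | .atom _ => 0
  | .neg φ => φ.MD
  | .and φ ψ => max φ.MD ψ.MD
  | .K _ φ => φ.MD + 1
  | .M _ φ => φ.MD + 1
  | .E _ φ => φ.MD + 1
  | .C _ φ => φ.MD + omega0

/-- A system of prebiworlds over agents `Agent` and propositional vocabulary `Atom`,
packaging the transfinite construction of μ-prebiworlds for all countable ordinals μ,
together with the recursive equations defining restriction. -/
structure PrebSys (Agent Atom : Type) where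
  /-- the collection of all prebiworlds (of all depths) -/
  W : Type 1
  /-- the depth of a prebiworld -/
  depth : W → Ordinal.{0}
  depth_countable : ∀ w, (depth w).card ≤ Cardinal.aleph0
  /-- the objective interpretation of a prebiworld -/
  obj : W → Set Atom
  /-- for a (μ+1)-prebiworld, the set A^w of μ-prebiworlds deemed (extendibly) possible -/
  poss : Agent → W → Set W
  /-- for a (μ+1)-prebiworld, the set Ā^w of μ-prebiworlds deemed (extendibly) impossible -/
  imposs : Agent → W → Set W
  /-- for a limit-depth prebiworld, its component (w)_α at α < depth w -/
  comp : W → Ordinal.{0} → W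
  /-- the restriction w|_α of w to depth α ≤ depth w -/
  restrict : W → Ordinal.{0} → W
  depth_poss : ∀ (A : Agent) (w v : W), v ∈ poss A w → depth w = depth v + 1
  depth_imposs : ∀ (A : Agent) (w v : W), v ∈ imposs A w → depth w = depth v + 1
  depth_comp : ∀ (w : W) (α : Ordinal.{0}), Order.IsSuccLimit (depth w) → α < depth w →
    depth (comp w α) = α
  comp_mono : ∀ (w : W) (α β : Ordinal.{0}), Order.IsSuccLimit (depth w) → α ≤ β → β < depth w →
    restrict (comp w β) α = comp w α
  ext_zero : ∀ w w' : W, depth w = 0 → depth w' = 0 → obj w = obj w' → w = w'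
  ext_succ : ∀ (w w' : W) (μ : Ordinal.{0}), depth w = μ + 1 → depth w' = μ + 1 →
    obj w = obj w' → (∀ A, poss A w = poss A w') → (∀ A, imposs A w = imposs A w') → w = w'
  ext_limit : ∀ w w' : W, Order.IsSuccLimit (depth w) → depth w' = depth w →
    (∀ α < depth w, comp w α = comp w' α) → w = w'
  depth_restrict : ∀ (w : W) (α : Ordinal.{0}), α ≤ depth w → depth (restrict w α) = α
  restrict_zero : ∀ w : W, obj (restrict w 0) = obj w
  restrict_limit : ∀ (w : W) (α β : Ordinal.{0}), Order.IsSuccLimit α → α ≤ depth w → β < α →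
    comp (restrict w α) β = restrict w β
  restrict_succ_limit : ∀ (w : W) (α : Ordinal.{0}), Order.IsSuccLimit (depth w) →
    α + 1 ≤ depth w → restrict w (α + 1) = comp w (α + 1)
  restrict_succ_obj : ∀ (w : W) (μ α : Ordinal.{0}), depth w = μ + 1 → α + 1 ≤ depth w →
    obj (restrict w (α + 1)) = obj w
  restrict_succ_poss : ∀ (w : W) (μ α : Ordinal.{0}) (A : Agent), depth w = μ + 1 →
    α + 1 ≤ depth w →
    poss A (restrict w (α + 1)) = (fun v => restrict v α) '' poss A w
  restrict_succ_imposs : ∀ (w : W) (μ α : Ordinal.{0}) (A : Agent), depth w = μ + 1 →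
    α + 1 ≤ depth w →
    imposs A (restrict w (α + 1)) = (fun v => restrict v α) '' imposs A w

/-- The precision order: v ≤ₚ w iff w restricted to the depth of v equals v. -/
def PrebSys.lep {Agent Atom : Type} (S : PrebSys Agent Atom) (v w : S.W) : Prop :=
  S.depth v ≤ S.depth w ∧ S.restrict w (S.depth v) = v

/-- A system of biworlds: prebiworlds together with the simultaneously
(transfinite-recursively) defined predicates `Biworld` and `Incompleted`
and their defining clauses. -/
structure BiSys (Agent Atom : Type) extends PrebSys Agent Atom where
  Biworld : W → Prop
  Incompleted : W → Prop
  biworld_zero : ∀ w : W, depth w = 0 → Biworld w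
  biworld_succ : ∀ (w : W) (μ : Ordinal.{0}), depth w = μ + 1 →
    (Biworld w ↔ ∀ A : Agent,
      poss A w ∪ imposs A w = {v | depth v = μ ∧ Biworld v} ∧
      ∀ v ∈ poss A w ∩ imposs A w, Incompleted v)
  biworld_limit : ∀ w : W, Order.IsSuccLimit (depth w) →
    (Biworld w ↔ ∀ α < depth w, Biworld (comp w α))
  incompleted_iff : ∀ w : W, Incompleted w ↔
    ∃ v₁ v₂ : W, v₁ ≠ v₂ ∧ Biworld v₁ ∧ Biworld v₂ ∧
      depth v₁ = depth w + 1 ∧ depth v₂ = depth w + 1 ∧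
      PrebSys.lep toPrebSys w v₁ ∧ PrebSys.lep toPrebSys w v₂

/-- A biworld is completed if it is not incompleted. -/
def BiSys.Completed {Agent Atom : Type} (S : BiSys Agent Atom) (w : S.W) : Prop :=
  ¬ S.Incompleted w

/-- For a limit-depth prebiworld w, the set A↑w. -/
def BiSys.upPoss {Agent Atom : Type} (S : BiSys Agent Atom) (A : Agent) (w : S.W) :
    Set S.W :=
  {v | S.depth v = S.depth w ∧ ∀ α < S.depth w, S.comp v α ∈ S.poss A (S.comp w (α + 1))}

/-- For a limit-depth prebiworld w, the set Ā↑w. -/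
def BiSys.upImposs {Agent Atom : Type} (S : BiSys Agent Atom) (A : Agent) (w : S.W) :
    Set S.W :=
  {v | S.depth v = S.depth w ∧ ∀ α < S.depth w, S.comp v α ∈ S.imposs A (S.comp w (α + 1))}

/-- A system of biworlds together with the three-valued valuation of COEL formulas
and its defining equations. -/
structure ValSys (Agent Atom : Type) extends BiSys Agent Atom where
  val : Form Agent Atom → W → TV
  val_atom : ∀ (P : Atom) (w : W), val (.atom P) w = TV.ofProp (P ∈ obj w)
  val_neg : ∀ (φ : Form Agent Atom) (w : W), val (.neg φ) w = (val φ w).inv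
  val_and : ∀ (φ ψ : Form Agent Atom) (w : W),
    val (.and φ ψ) w = (val φ w).tmin (val ψ w)
  val_K_zero : ∀ (A : Agent) (φ : Form Agent Atom) (w : W), depth w = 0 →
    val (.K A φ) w = TV.u
  val_K_succ : ∀ (A : Agent) (φ : Form Agent Atom) (w : W) (μ : Ordinal.{0}),
    depth w = μ + 1 → val (.K A φ) w = TV.tglbSet (val φ '' poss A w)
  val_K_limit : ∀ (A : Agent) (φ : Form Agent Atom) (w : W), Order.IsSuccLimit (depth w) →
    val (.K A φ) w = TV.plubSet {x | ∃ α < depth w, x = val (.K A φ) (comp w α)}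
  val_M_zero : ∀ (A : Agent) (φ : Form Agent Atom) (w : W), depth w = 0 →
    val (.M A φ) w = TV.u
  val_M_succ : ∀ (A : Agent) (φ : Form Agent Atom) (w : W) (μ : Ordinal.{0}),
    depth w = μ + 1 →
    val (.M A φ) w = TV.tglbSet ((fun v => (val φ v).inv) '' imposs A w)
  val_M_limit : ∀ (A : Agent) (φ : Form Agent Atom) (w : W), Order.IsSuccLimit (depth w) →
    val (.M A φ) w = TV.plubSet {x | ∃ α < depth w, x = val (.M A φ) (comp w α)}
  val_E : ∀ (G : Set Agent) (φ : Form Agent Atom) (w : W),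
    val (.E G φ) w = TV.tglbSet {x | ∃ A ∈ G, x = val (.K A φ) w}
  val_C : ∀ (G : Set Agent) (φ : Form Agent Atom) (w : W),
    val (.C G φ) w = TV.tglbSet {x | ∃ k : ℕ, 1 ≤ k ∧ x = val (Form.Eiter G k φ) w}

/-- A world: a completed (ω²+1)-biworld. -/
def ValSys.World {Agent Atom : Type} (S : ValSys Agent Atom) (w : S.W) : Prop :=
  S.Biworld w ∧ S.depth w = omega0 ^ 2 + 1 ∧ S.toBiSys.Completed w

/-- Accessibility in the canonical Kripke structure K*: w R_A w' iff w'|_{ω²} ∈ A^w. -/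
def ValSys.Racc {Agent Atom : Type} (S : ValSys Agent Atom) (A : Agent)
    (w w' : S.W) : Prop :=
  S.restrict w' (omega0 ^ 2) ∈ S.poss A w

/-- Two-valued Kripke valuation on the canonical Kripke structure K* of worlds. -/
def ValSys.kval {Agent Atom : Type} (S : ValSys Agent Atom) :
    Form Agent Atom → S.W → Prop
  | .atom P, w => P ∈ S.obj w
  | .neg φ, w => ¬ S.kval φ w
  | .and φ ψ, w => S.kval φ w ∧ S.kval ψ w
  | .K A φ, w => ∀ w', S.World w' → S.Racc A w w' → S.kval φ w'
  | .M A φ, w => ∀ w', S.World w' → S.kval φ w' → S.Racc A w w'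
  | .E G φ, w => ∀ A ∈ G, ∀ w', S.World w' → S.Racc A w w' → S.kval φ w'
  | .C G φ, w => ∀ w', Relation.TransGen (fun x y => S.World y ∧ ∃ A ∈ G, S.Racc A x y) w w' →
      S.kval φ w'


namespace PrebSys

variable {Agent Atom : Type}

/-- Key consequence of `comp_mono` applied to `restrict w (depth w)`:
the theorem holds outright when `depth w` is a limit and `α < depth w`. -/
lemma rr_key (S : PrebSys Agent Atom) (w : S.W) (γ α : Ordinal.{0})
    (h : Order.IsSuccLimit (S.depth w)) (hγα : γ ≤ α) (hα : α < S.depth w) :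
    S.restrict (S.restrict w α) γ = S.restrict w γ := by
  set vv := S.restrict w (S.depth w) with hvv
  have hd : S.depth vv = S.depth w := S.depth_restrict w _ le_rfl
  have h1 : S.comp vv α = S.restrict w α := S.restrict_limit w _ α h le_rfl hα
  have h2 : S.comp vv γ = S.restrict w γ :=
    S.restrict_limit w _ γ h le_rfl (lt_of_le_of_lt hγα hα)
  have h3 : S.restrict (S.comp vv α) γ = S.comp vv γ :=
    S.comp_mono vv γ α (by rw [hd]; exact h) hγα (by rw [hd]; exact hα)
  rw [h1, h2] at h3
  exact h3

/-- For limit-depth prebiworlds, restriction agrees with taking components. -/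
lemma rr_restrict_eq_comp (S : PrebSys Agent Atom) :
    ∀ β : Ordinal.{0}, ∀ v : S.W, Order.IsSuccLimit (S.depth v) → β < S.depth v →
      S.restrict v β = S.comp v β := by
  intro β
  induction β using Ordinal.induction with
  | h β IH =>
  intro v hv hβ
  rcases Ordinal.zero_or_succ_or_isSuccLimit β with h0 | ⟨δ, hδs⟩ | hlim
  · subst h0
    have h1lt : (1 : Ordinal.{0}) < S.depth v := by
      have := hv.succ_lt hv.pos
      simpa using this
    have e1 : S.restrict v 1 = S.comp v 1 := by
      have := S.restrict_succ_limit v 0 hv (by simpa using h1lt.le)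
      simpa using this
    have e2 : S.restrict (S.comp v 1) 0 = S.comp v 0 :=
      S.comp_mono v 0 1 hv (zero_le) h1lt
    have e3 := S.rr_key v 0 1 hv (zero_le) h1lt
    rw [e1, e2] at e3
    exact e3.symm
  · have hδ : β = δ + 1 := by rw [← hδs, Ordinal.add_one_eq_succ]
    subst hδ
    exact S.restrict_succ_limit v δ hv hβ.le
  · have hdr : S.depth (S.restrict v β) = β := S.depth_restrict v β hβ.le
    have hdc : S.depth (S.comp v β) = β := S.depth_comp v β hv hβ
    apply S.ext_limit (S.restrict v β) (S.comp v β) (by rw [hdr]; exact hlim)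
      (by rw [hdc, hdr])
    intro δ hδ
    rw [hdr] at hδ
    have c1 : S.comp (S.restrict v β) δ = S.restrict v δ :=
      S.restrict_limit v β δ hlim hβ.le hδ
    have c2 : S.restrict (S.comp v β) δ = S.comp (S.comp v β) δ :=
      IH δ hδ (S.comp v β) (by rw [hdc]; exact hlim) (by rw [hdc]; exact hδ)
    have c3 : S.restrict (S.comp v β) δ = S.comp v δ := S.comp_mono v δ β hv hδ.le hβ
    have c4 : S.restrict v δ = S.comp v δ := IH δ hδ v hv (hδ.trans hβ)
    rw [c1, c4, ← c3, c2]

/-- Restricting a prebiworld to its own depth gives it back. -/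
lemma rr_restrict_self (S : PrebSys Agent Atom) :
    ∀ (d : Ordinal.{0}) (v : S.W), S.depth v = d → S.restrict v d = v := by
  intro d
  induction d using Ordinal.induction with
  | h d IH =>
  intro v hv
  rcases Ordinal.zero_or_succ_or_isSuccLimit d with h0 | ⟨μ, hμs⟩ | hlim
  · subst h0
    exact S.ext_zero _ _ (S.depth_restrict v 0 (by rw [hv])) hv (S.restrict_zero v)
  · have hμ : d = μ + 1 := by rw [← hμs, Ordinal.add_one_eq_succ]
    subst hμ
    have hμlt : μ < μ + 1 := lt_add_one μ
    have himg : ∀ (s : Set S.W), (∀ v' ∈ s, S.depth v' = μ) →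
        (fun v' => S.restrict v' μ) '' s = s := by
      intro s hs
      have : ∀ v' ∈ s, S.restrict v' μ = id v' := by
        intro v' hv'
        exact IH μ hμlt v' (hs v' hv')
      rw [Set.image_congr this, Set.image_id]
    have hdp : ∀ A, ∀ v' ∈ S.poss A v, S.depth v' = μ := by
      intro A v' hv'
      have h := S.depth_poss A v v' hv'
      rw [hv] at h
      simpa only [Ordinal.add_one_eq_succ, Order.succ_eq_succ_iff] using h.symm
    have hdi : ∀ A, ∀ v' ∈ S.imposs A v, S.depth v' = μ := by
      intro A v' hv'
      have h := S.depth_imposs A v v' hv'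
      rw [hv] at h
      simpa only [Ordinal.add_one_eq_succ, Order.succ_eq_succ_iff] using h.symm
    apply S.ext_succ _ _ μ (S.depth_restrict v _ hv.ge) hv
    · exact S.restrict_succ_obj v μ μ hv hv.ge
    · intro A
      rw [S.restrict_succ_poss v μ μ A hv hv.ge]
      exact himg _ (hdp A)
    · intro A
      rw [S.restrict_succ_imposs v μ μ A hv hv.ge]
      exact himg _ (hdi A)
  · refine (S.ext_limit v (S.restrict v d) (by rw [hv]; exact hlim)
      (by rw [S.depth_restrict v d hv.ge, hv]) ?_).symm
    intro β hβ
    rw [hv] at hβ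
    have h1 : S.comp (S.restrict v d) β = S.restrict v β :=
      S.restrict_limit v d β hlim hv.ge hβ
    have h2 : S.restrict v β = S.comp v β :=
      S.rr_restrict_eq_comp β v (by rw [hv]; exact hlim) (by rw [hv]; exact hβ)
    rw [h1, ← h2]

lemma rr_aux (S : PrebSys Agent Atom) :
    ∀ α γ : Ordinal.{0}, ∀ w : S.W, γ ≤ α → α ≤ S.depth w →
      S.restrict (S.restrict w α) γ = S.restrict w γ := by
  intro α
  induction α using Ordinal.induction with
  | h α IHα =>
  intro γ
  induction γ using Ordinal.induction with
  | h γ IHγ =>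
  intro w hγα hα
  rcases eq_or_lt_of_le hγα with rfl | hlt
  · exact S.rr_restrict_self γ (S.restrict w γ) (S.depth_restrict w γ hα)
  rcases eq_or_lt_of_le hα with heq | hαlt
  · rw [heq, S.rr_restrict_self _ w rfl]
  rcases Ordinal.zero_or_succ_or_isSuccLimit α with h0 | ⟨δ, hδs⟩ | hlim
  · subst h0
    exact absurd hlt (not_lt_of_ge zero_le)
  · -- α = δ + 1
    have hδ : α = δ + 1 := by rw [← hδs, Ordinal.add_one_eq_succ]
    subst hδ
    rcases Ordinal.zero_or_succ_or_isSuccLimit (S.depth w) with hd0 | ⟨ν, hdνs⟩ | hdlim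
    · rw [hd0] at hαlt
      exact absurd hαlt (not_lt_of_ge (zero_le))
    · have hdμ : S.depth w = ν + 1 := by rw [← hdνs, Ordinal.add_one_eq_succ]
      have hud : S.depth (S.restrict w (δ + 1)) = δ + 1 := S.depth_restrict w _ hα
      have hδν : δ ≤ ν := by
        have : δ + 1 < ν + 1 := by rw [← hdμ]; exact hαlt
        have := (by
          rwa [Ordinal.add_one_eq_succ, Ordinal.add_one_eq_succ,
            Order.succ_lt_succ_iff] at this : δ < ν)
        exact this.le
      rcases Ordinal.zero_or_succ_or_isSuccLimit γ with hg0 | ⟨ε, hgεs⟩ | hglim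
      · subst hg0
        apply S.ext_zero _ _
          (S.depth_restrict _ 0 (by rw [hud]; exact zero_le))
          (S.depth_restrict w 0 (zero_le))
        rw [S.restrict_zero, S.restrict_zero]
        exact S.restrict_succ_obj w ν δ hdμ hα
      · have hgε : γ = ε + 1 := by rw [← hgεs, Ordinal.add_one_eq_succ]
        subst hgε
        have hεδ : ε + 1 ≤ δ + 1 := hlt.le
        have hεδ' : ε ≤ δ := by
          have h := hlt
          rw [Ordinal.add_one_eq_succ, Ordinal.add_one_eq_succ,
            Order.succ_lt_succ_iff] at h
          exact h.le
        have hdv : ∀ A, ∀ v ∈ S.poss A w, S.depth v = ν := by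
          intro A v hv
          have h := S.depth_poss A w v hv
          rw [hdμ] at h
          simpa only [Ordinal.add_one_eq_succ, Order.succ_eq_succ_iff] using h.symm
        have hdvi : ∀ A, ∀ v ∈ S.imposs A w, S.depth v = ν := by
          intro A v hv
          have h := S.depth_imposs A w v hv
          rw [hdμ] at h
          simpa only [Ordinal.add_one_eq_succ, Order.succ_eq_succ_iff] using h.symm
        have himg : ∀ (s : Set S.W), (∀ v ∈ s, S.depth v = ν) →
            (fun v => S.restrict v ε) '' ((fun v => S.restrict v δ) '' s) =
              (fun v => S.restrict v ε) '' s := by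
          intro s hs
          rw [← Set.image_comp]
          apply Set.image_congr
          intro v hv
          exact IHα δ (lt_add_one δ) ε v hεδ' (by rw [hs v hv]; exact hδν)
        apply S.ext_succ _ _ ε
          (S.depth_restrict _ _ (by rw [hud]; exact hεδ))
          (S.depth_restrict w _ (hεδ.trans hα))
        · rw [S.restrict_succ_obj (S.restrict w (δ + 1)) δ ε hud (by rw [hud]; exact hεδ),
            S.restrict_succ_obj w ν δ hdμ hα,
            S.restrict_succ_obj w ν ε hdμ (hεδ.trans hα)]
        · intro A
          rw [S.restrict_succ_poss (S.restrict w (δ + 1)) δ ε A hud (by rw [hud]; exact hεδ),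
            S.restrict_succ_poss w ν δ A hdμ hα,
            S.restrict_succ_poss w ν ε A hdμ (hεδ.trans hα)]
          exact himg _ (hdv A)
        · intro A
          rw [S.restrict_succ_imposs (S.restrict w (δ + 1)) δ ε A hud (by rw [hud]; exact hεδ),
            S.restrict_succ_imposs w ν δ A hdμ hα,
            S.restrict_succ_imposs w ν ε A hdμ (hεδ.trans hα)]
          exact himg _ (hdvi A)
      · -- γ limit
        have hud : S.depth (S.restrict w (δ + 1)) = δ + 1 := S.depth_restrict w _ hα
        have hγu : γ ≤ S.depth (S.restrict w (δ + 1)) := by rw [hud]; exact hlt.le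
        apply S.ext_limit _ (S.restrict w γ)
          (by rw [S.depth_restrict _ γ hγu]; exact hglim)
          (by rw [S.depth_restrict _ γ hγu, S.depth_restrict w γ (hγα.trans hα)])
        intro β hβ
        rw [S.depth_restrict _ γ hγu] at hβ
        rw [S.restrict_limit _ γ β hglim hγu hβ,
          S.restrict_limit w γ β hglim (hγα.trans hα) hβ]
        exact IHγ β hβ w (hβ.le.trans hγα) hα
    · exact S.rr_key w γ (δ + 1) hdlim hγα hαlt
  · -- α limit
    have hud : S.depth (S.restrict w α) = α := S.depth_restrict w α hα
    have h1 : S.restrict (S.restrict w α) γ = S.comp (S.restrict w α) γ :=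
      S.rr_restrict_eq_comp γ (S.restrict w α) (by rw [hud]; exact hlim)
        (by rw [hud]; exact hlt)
    rw [h1, S.restrict_limit w α γ hlim hα hlt]

end PrebSys

/-- (w|_α)|_γ = w|_γ for γ ≤ α ≤ depth w. -/
theorem restrict_restrict {Agent Atom : Type} (S : PrebSys Agent Atom) (w : S.W)
    (γ α : Ordinal.{0}) (hγα : γ ≤ α) (hα : α ≤ S.depth w) :
    S.restrict (S.restrict w α) γ = S.restrict w γ :=
  S.rr_aux α γ w hγα hα
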